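/- The arithmetic function b₃, where b₃(n) is the number of primitive Dirichlet characters χ modulo n (with complex values) satisfying χ³ = 1, is multiplicative, and its values on prime powers are: b₃(2^r) = 0 for all r ≥ 1; b₃(9) = 2 and b₃(3^r) = 0 for r = 1 and r ≥ 3; and for every prime p ≥ 5 and every r ≥ 1, b₃(p^r) = 2 if r = 1 and p ≡ 1 (mod 3), and b₃(p^r) = 0 otherwise. -/

import Mathlib

/-- `b₃ n` is the number of primitive Dirichlet characters `χ` modulo `n` with values in `ℂ`
satisfying `χ ^ 3 = 1`. -/
noncomputable def b₃ (n : ℕ) : ℕ :=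
  Nat.card {χ : DirichletCharacter ℂ n // χ.IsPrimitive ∧ χ ^ 3 = 1}

namespace B3Aux

open DirichletCharacter

/-- The "primitive" condition expressed on unit-group homs. -/
def Prim (n : ℕ) (f : (ZMod n)ˣ →* ℂˣ) : Prop :=
  ∀ d (h : d ∣ n), d ≠ n → ¬ ((ZMod.unitsMap h).ker ≤ f.ker)

lemma mem_ker_unitsMap {d n : ℕ} (h : d ∣ n) (x : (ZMod n)ˣ) :
    x ∈ (ZMod.unitsMap h).ker ↔ (ZMod.castHom h (ZMod d)) (x : ZMod n) = 1 := by
  rw [MonoidHom.mem_ker, ZMod.unitsMap_def]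
  constructor
  · intro hx
    have := congrArg Units.val hx
    simpa using this
  · intro hx
    ext
    simpa using hx

lemma cube_iff {n : ℕ} (χ : DirichletCharacter ℂ n) :
    χ ^ 3 = 1 ↔ (MulChar.mulEquivToUnitHom χ) ^ 3 = 1 := by
  rw [← map_pow, map_eq_one_iff _ (MulChar.mulEquivToUnitHom).injective]

lemma isPrimitive_iff_prim {n : ℕ} [NeZero n] (χ : DirichletCharacter ℂ n) :
    χ.IsPrimitive ↔ Prim n (MulChar.mulEquivToUnitHom χ) := by
  have htu : MulChar.mulEquivToUnitHom χ = χ.toUnitHom := (MulChar.toUnitHom_eq χ).symm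
  rw [htu]
  constructor
  · intro hp d h hdn hker
    have hft : χ.FactorsThrough d := (factorsThrough_iff_ker_unitsMap h).mpr hker
    have : χ.conductor ≤ d := Nat.sInf_le hft
    rw [hp] at this
    exact hdn (le_antisymm (Nat.le_of_dvd (Nat.pos_of_ne_zero (NeZero.ne n)) h) this)
  · intro hP
    by_contra h0
    exact hP χ.conductor (conductor_dvd_level χ) h0
      ((factorsThrough_iff_ker_unitsMap (conductor_dvd_level χ)).mp (factorsThrough_conductor χ))

lemma b₃_eq (n : ℕ) [NeZero n] :
    b₃ n = Nat.card {f : (ZMod n)ˣ →* ℂˣ // f ^ 3 = 1 ∧ Prim n f} := by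
  refine Nat.card_congr (Equiv.subtypeEquiv (MulChar.mulEquivToUnitHom).toEquiv fun χ => ?_)
  simp only [MulEquiv.toEquiv_eq_coe, EquivLike.coe_coe]
  rw [← cube_iff, ← isPrimitive_iff_prim, and_comm]

/-- A cube-trivial character into `ℂˣ` on a group of order prime to 3 is trivial. -/
lemma cube_trivial {G : Type*} [Group G] [Finite G] (f : G →* ℂˣ) (hf : f ^ 3 = 1)
    (h3 : ¬ (3 ∣ Nat.card G)) : f = 1 := by
  ext x
  have h1 : f x ^ 3 = 1 := by
    rw [← MonoidHom.pow_apply, hf, MonoidHom.one_apply]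
  have h2 : f x ^ Nat.card G = 1 := by
    rw [← map_pow, pow_card_eq_one', map_one]
  have d1 : orderOf (f x) ∣ 3 := orderOf_dvd_of_pow_eq_one h1
  have d2 : orderOf (f x) ∣ Nat.card G := orderOf_dvd_of_pow_eq_one h2
  have hcop : Nat.Coprime 3 (Nat.card G) := (Nat.Prime.coprime_iff_not_dvd (by norm_num)).mpr h3
  have : orderOf (f x) ∣ 1 := hcop ▸ Nat.dvd_gcd d1 d2
  have h1 : orderOf (f x) = 1 := Nat.dvd_one.mp this
  rw [MonoidHom.one_apply, ← orderOf_eq_one_iff.mp h1]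

end B3Aux

namespace B3Aux
open DirichletCharacter

lemma b3_zero_of_forall_ker {n : ℕ} [NeZero n] {d : ℕ} (hd : d ∣ n) (hne : d ≠ n)
    (H : ∀ f : (ZMod n)ˣ →* ℂˣ, f ^ 3 = 1 → (ZMod.unitsMap hd).ker ≤ f.ker) :
    b₃ n = 0 := by
  rw [b₃_eq]
  rw [Nat.card_eq_zero]
  left
  exact ⟨fun ⟨f, h1, h2⟩ => h2 d hd hne (H f h1)⟩

lemma b3_eq_zero_of_not_dvd {n : ℕ} [NeZero n] (hn : 1 ≠ n) (h3 : ¬ 3 ∣ Nat.card (ZMod n)ˣ) :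
    b₃ n = 0 := by
  refine b3_zero_of_forall_ker (one_dvd n) hn (fun f hf => ?_)
  rw [cube_trivial f hf h3]
  intro x _
  simp [MonoidHom.mem_ker]

lemma card_units_zmod (n : ℕ) [NeZero n] : Nat.card (ZMod n)ˣ = n.totient := by
  rw [Nat.card_eq_fintype_card, ZMod.card_units_eq_totient]

/-- key: x ≡ 1 mod p implies x^(p^(r-1)) = 1 mod p^r, unit version -/
lemma pow_eq_one_of_mem_ker {p r : ℕ} (hp : 1 ≤ r) [NeZero (p ^ r)]
    (x : (ZMod (p ^ r))ˣ) (hx : x ∈ (ZMod.unitsMap (dvd_pow_self p (by omega : r ≠ 0))).ker) :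
    x ^ p ^ (r - 1) = 1 := by
  rw [mem_ker_unitsMap] at hx
  set a : ℕ := (x : ZMod (p ^ r)).val with ha
  have hxa : ((a : ZMod (p ^ r))) = (x : ZMod (p ^ r)) := ZMod.natCast_zmod_val _
  have h1 : ((a : ZMod p)) = 1 := by
    rw [← map_natCast (ZMod.castHom (dvd_pow_self p (by omega : r ≠ 0)) (ZMod p)) a, hxa]
    exact hx
  have hdvd : (p : ℤ) ∣ (a : ℤ) - 1 := by
    rw [← ZMod.intCast_zmod_eq_zero_iff_dvd]
    push_cast
    rw [h1]
    ring
  have key := dvd_sub_pow_of_dvd_sub hdvd (r - 1)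
  rw [show r - 1 + 1 = r by omega] at key
  rw [one_pow] at key
  have key3 : (((a : ℤ) ^ p ^ (r - 1) - 1 : ℤ) : ZMod (p ^ r)) = 0 := by
    rw [ZMod.intCast_zmod_eq_zero_iff_dvd]
    push_cast at key ⊢
    exact key
  have key4 : ((x : ZMod (p ^ r)) : ZMod (p ^ r)) ^ p ^ (r - 1) = 1 := by
    push_cast at key3
    rw [hxa] at key3
    linear_combination key3
  ext
  push_cast
  exact key4

lemma b3_prime_pow_eq_zero {p r : ℕ} (hp : p.Prime) (hp3 : p ≠ 3) (hr : 2 ≤ r) :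
    b₃ (p ^ r) = 0 := by
  haveI : NeZero (p ^ r) := ⟨pow_ne_zero r hp.pos.ne'⟩
  refine b3_zero_of_forall_ker (dvd_pow_self p (by omega : r ≠ 0)) ?_ (fun f hf x hx => ?_)
  · intro h
    have := Nat.pow_right_injective hp.two_le (by simpa [pow_one] using h : p ^ 1 = p ^ r)
    omega
  · have key := pow_eq_one_of_mem_ker (by omega) x hx
    rw [MonoidHom.mem_ker]
    have h1 : f x ^ 3 = 1 := by rw [← MonoidHom.pow_apply, hf, MonoidHom.one_apply]
    have h2 : f x ^ p ^ (r - 1) = 1 := by rw [← map_pow, key, map_one]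
    have d1 : orderOf (f x) ∣ 3 := orderOf_dvd_of_pow_eq_one h1
    have d2 : orderOf (f x) ∣ p ^ (r - 1) := orderOf_dvd_of_pow_eq_one h2
    have hcop : Nat.Coprime 3 (p ^ (r - 1)) := by
      refine (Nat.Prime.coprime_iff_not_dvd (by norm_num)).mpr (fun hd => ?_)
      have := (Nat.prime_three).dvd_of_dvd_pow hd
      exact hp3 ((Nat.prime_dvd_prime_iff_eq Nat.prime_three hp).mp this).symm
    have : orderOf (f x) ∣ 1 := hcop ▸ Nat.dvd_gcd d1 d2
    rw [← orderOf_eq_one_iff.mp (Nat.dvd_one.mp this)]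

/-- Hensel-style lifting of cube roots mod powers of 3. -/
lemma cube_int : ∀ (k : ℕ) (x : ℤ), 9 ∣ x - 1 → ∃ y : ℤ, 3 ∣ y - 1 ∧ (3:ℤ) ^ k ∣ x - y ^ 3 := by
  intro k
  induction k with
  | zero => exact fun x hx => ⟨1, by simp, by simp⟩
  | succ k ih =>
    intro x hx
    rcases Nat.lt_or_ge (k + 1) 3 with h | h
    · refine ⟨1, by simp, ?_⟩
      have h9 : (3:ℤ) ^ (k+1) ∣ 9 := by
        calc (3:ℤ) ^ (k+1) ∣ 3 ^ 2 := pow_dvd_pow 3 (by omega)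
        _ = 9 := by norm_num
      simpa using h9.trans hx
    · obtain ⟨m, rfl⟩ : ∃ m, k = m + 2 := ⟨k - 2, by omega⟩
      obtain ⟨y, hy1, hy2⟩ := ih x hx
      obtain ⟨t, ht⟩ := hy2
      obtain ⟨c, hc⟩ := hy1
      obtain ⟨s, hs⟩ : (3:ℤ) ∣ 1 - y ^ 2 := ⟨-(c * (y + 1)), by linear_combination (-(y+1)) * hc⟩
      refine ⟨y + 3 ^ (m + 1) * t, ?_, ?_⟩
      · exact ⟨c + 3 ^ m * t, by linear_combination hc⟩
      · refine ⟨t * s - 3 ^ m * y * t ^ 2 - 3 ^ (2 * m) * t ^ 3, ?_⟩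
        linear_combination ht + (3 ^ (m + 2) * t) * hs

lemma b3_three_pow_eq_zero {r : ℕ} (hr : 3 ≤ r) : b₃ (3 ^ r) = 0 := by
  haveI : NeZero (3 ^ r) := ⟨pow_ne_zero r (by norm_num)⟩
  have h9 : (9 : ℕ) ∣ 3 ^ r := by
    calc (9:ℕ) = 3 ^ 2 := by norm_num
    _ ∣ 3 ^ r := pow_dvd_pow 3 (by omega)
  refine b3_zero_of_forall_ker h9 ?_ (fun f hf x hx => ?_)
  · intro h
    have := Nat.pow_right_injective (by norm_num) (by simpa using h : (3:ℕ) ^ 2 = 3 ^ r)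
    omega
  · rw [mem_ker_unitsMap] at hx
    set a : ℕ := (x : ZMod (3 ^ r)).val with ha
    have hxa : ((a : ZMod (3 ^ r))) = (x : ZMod (3 ^ r)) := ZMod.natCast_zmod_val _
    have h1 : ((a : ZMod 9)) = 1 := by
      rw [← map_natCast (ZMod.castHom h9 (ZMod 9)) a, hxa]; exact hx
    have hdvd : (9 : ℤ) ∣ (a : ℤ) - 1 := by
      have := (ZMod.intCast_zmod_eq_zero_iff_dvd ((a:ℤ) - 1) 9).mp (by push_cast [h1]; ring)
      exact_mod_cast this
    obtain ⟨y, hy1, hy3⟩ := cube_int r ((a : ℤ)) hdvd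
    have hyc : ((y : ZMod (3 ^ r))) ^ 3 = (x : ZMod (3 ^ r)) := by
      have : (((a : ℤ) - y ^ 3 : ℤ) : ZMod (3 ^ r)) = 0 := by
        rw [ZMod.intCast_zmod_eq_zero_iff_dvd]
        push_cast at hy3 ⊢
        exact hy3
      push_cast at this
      rw [hxa] at this
      linear_combination -this
    have hyu : IsUnit ((y : ℤ) : ZMod (3 ^ r)) := by
      have : IsUnit (((y : ℤ) : ZMod (3 ^ r)) ^ 3) := hyc ▸ x.isUnit
      exact (isUnit_pow_iff (by norm_num)).mp this
    have hxy : x = hyu.unit ^ 3 := by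
      ext
      push_cast
      rw [IsUnit.unit_spec, hyc]
    rw [MonoidHom.mem_ker, hxy, map_pow, ← MonoidHom.pow_apply, hf, MonoidHom.one_apply]

end B3Aux

namespace B3Aux
open DirichletCharacter

lemma b3_one : b₃ 1 = 1 := by
  rw [b₃]
  rw [Nat.card_eq_one_iff_unique]
  constructor
  · infer_instance
  · exact ⟨⟨1, isPrimitive_one_level_one, one_pow 3⟩⟩

lemma dirichlet_cube_eq_one {n : ℕ} [NeZero n] (h3 : ¬ 3 ∣ Nat.card (ZMod n)ˣ)
    {χ : DirichletCharacter ℂ n} (hχ : χ ^ 3 = 1) : χ = 1 := by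
  have := cube_trivial (MulChar.mulEquivToUnitHom χ) ((cube_iff χ).mp hχ) h3
  exact (MulEquiv.map_eq_one_iff (MulChar.mulEquivToUnitHom)).mp this

lemma isPrimitive_iff_ne_one_of_prime {p : ℕ} (hp : p.Prime) (χ : DirichletCharacter ℂ p) :
    χ.IsPrimitive ↔ χ ≠ 1 := by
  haveI : NeZero p := ⟨hp.pos.ne'⟩
  constructor
  · intro h h1
    rw [h1, IsPrimitive, conductor_one] at h
    exact hp.one_lt.ne h
  · intro hne
    rcases (Nat.Prime.eq_one_or_self_of_dvd hp _ (conductor_dvd_level χ)) with h | h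
    · exact absurd (eq_one_iff_conductor_eq_one.mpr h) hne
    · exact h

lemma isPrimitive_iff_ne_one_nine (χ : DirichletCharacter ℂ 9) (hχ : χ ^ 3 = 1) :
    χ.IsPrimitive ↔ χ ≠ 1 := by
  constructor
  · intro h h1
    rw [h1, IsPrimitive, conductor_one] at h
    exact absurd h (by norm_num)
  · intro hne
    have hd : χ.conductor ∣ 9 := conductor_dvd_level χ
    have hle : χ.conductor ≤ 9 := Nat.le_of_dvd (by norm_num) hd
    interval_cases h : χ.conductor <;> revert hd <;> intro hd <;> first
      | (exfalso; revert hd; decide)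
      | skip
    · exact absurd (eq_one_iff_conductor_eq_one.mpr h) hne
    · -- conductor = 3
      exfalso
      have hft : χ.FactorsThrough 3 := h ▸ factorsThrough_conductor χ
      obtain ⟨h3, χ₀, hχ₀⟩ := hft
      have hcube : (changeLevel h3 χ₀) ^ 3 = 1 := hχ₀ ▸ hχ
      rw [← map_pow] at hcube
      have hχ₀3 : χ₀ ^ 3 = 1 := (changeLevel_eq_one_iff h3).mp hcube
      have h2 : ¬ (3 ∣ Nat.card (ZMod 3)ˣ) := by
        rw [card_units_zmod]
        decide
      have : χ₀ = 1 := dirichlet_cube_eq_one h2 hχ₀3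
      rw [this, map_one] at hχ₀
      exact hne hχ₀
    · exact h

lemma b3_eq_card_units {n : ℕ} [NeZero n]
    (hiff : ∀ χ : DirichletCharacter ℂ n, χ ^ 3 = 1 → (χ.IsPrimitive ↔ χ ≠ 1)) :
    b₃ n = Nat.card {u : (ZMod n)ˣ // u ^ 3 = 1 ∧ u ≠ 1} := by
  haveI : NeZero ((Monoid.exponent (ZMod n)ˣ : ℕ) : ℂ) :=
    ⟨Nat.cast_ne_zero.mpr Monoid.exponent_ne_zero_of_finite⟩
  obtain ⟨e⟩ := DirichletCharacter.mulEquiv_units ℂ n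
  refine Nat.card_congr (Equiv.subtypeEquiv e.toEquiv fun χ => ?_)
  simp only [MulEquiv.toEquiv_eq_coe, EquivLike.coe_coe]
  constructor
  · rintro ⟨hp, hc⟩
    refine ⟨by rw [← map_pow, hc, map_one], ?_⟩
    intro h1
    exact ((hiff χ hc).mp hp) ((MulEquiv.map_eq_one_iff e).mp h1)
  · rintro ⟨hc, hne⟩
    have hc' : χ ^ 3 = 1 := (MulEquiv.map_eq_one_iff e).mp (by rw [map_pow]; exact hc)
    exact ⟨(hiff χ hc').mpr (fun h => hne (by rw [h, map_one])), hc'⟩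

lemma count_nine : Nat.card {u : (ZMod 9)ˣ // u ^ 3 = 1 ∧ u ≠ 1} = 2 := by
  rw [Nat.card_eq_fintype_card]
  decide

lemma b3_nine : b₃ 9 = 2 := by
  rw [b3_eq_card_units (fun χ hχ => isPrimitive_iff_ne_one_nine χ hχ), count_nine]

lemma count_prime {p : ℕ} (hp : p.Prime) (h3 : p % 3 = 1) :
    Nat.card {u : (ZMod p)ˣ // u ^ 3 = 1 ∧ u ≠ 1} = 2 := by
  haveI : Fact p.Prime := ⟨hp⟩
  obtain ⟨g, hg⟩ := IsCyclic.exists_generator (α := (ZMod p)ˣ)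
  have hcard : Fintype.card (ZMod p)ˣ = p - 1 := ZMod.card_units p
  have hp5 : 3 ≤ p := by
    rcases hp.two_le.lt_or_eq with h | h
    · omega
    · omega
  obtain ⟨M, hM⟩ : ∃ M, Fintype.card (ZMod p)ˣ = 3 * M := by
    refine ⟨(p - 1) / 3, ?_⟩
    rw [hcard]
    omega
  have hM0 : M ≠ 0 := by
    have := Fintype.card_pos (α := (ZMod p)ˣ)
    omega
  have horder : orderOf g = 3 * M := by
    rw [← hM, ← Nat.card_eq_fintype_card]
    exact orderOf_eq_card_of_forall_mem_zpowers hg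
  set ζ := g ^ M with hζdef
  have hζ3 : ζ ^ 3 = 1 := by
    rw [hζdef, ← pow_mul, mul_comm, ← horder, pow_orderOf_eq_one]
  have hζ1 : ζ ≠ 1 := by
    intro h
    have := orderOf_dvd_of_pow_eq_one (h : g ^ M = 1)
    rw [horder] at this
    have := Nat.le_of_dvd (by omega) this
    omega
  have hζ2 : ζ ^ 2 ≠ 1 := by
    intro h
    rw [hζdef, ← pow_mul] at h
    have := orderOf_dvd_of_pow_eq_one h
    rw [horder] at this
    have := Nat.le_of_dvd (by omega : 0 < M * 2) this
    omega
  have hzz : ζ ≠ ζ ^ 2 := by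
    intro h
    apply hζ1
    have : ζ * 1 = ζ * ζ := by rw [mul_one, ← sq]; exact h
    exact (mul_left_cancel this).symm
  have hset : {u : (ZMod p)ˣ | u ^ 3 = 1 ∧ u ≠ 1} = {ζ, ζ ^ 2} := by
    ext u
    constructor
    · rintro ⟨hu3, hu1⟩
      obtain ⟨k, hk⟩ := mem_powers_iff_mem_zpowers.mpr (hg u)
      simp only at hk
      have hgk3 : g ^ (k * 3) = 1 := by rw [pow_mul, hk]; exact hu3
      have hdvd : orderOf g ∣ k * 3 := orderOf_dvd_of_pow_eq_one hgk3
      rw [horder] at hdvd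
      have hMk : M ∣ k := by
        have : 3 * M ∣ 3 * k := by rwa [mul_comm k 3] at hdvd
        exact (mul_dvd_mul_iff_left (by norm_num : (3:ℕ) ≠ 0)).mp this
      obtain ⟨j, rfl⟩ := hMk
      have hu : u = ζ ^ j := by rw [← hk, hζdef, ← pow_mul]
      have hj : u = ζ ^ (j % 3) := by
        conv_lhs => rw [hu, ← Nat.div_add_mod j 3]
        rw [pow_add, pow_mul, hζ3, one_pow, one_mul]
      have : j % 3 = 0 ∨ j % 3 = 1 ∨ j % 3 = 2 := by omega
      rcases this with h | h | h
      · rw [h, pow_zero] at hj; exact absurd hj hu1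
      · rw [h, pow_one] at hj; exact Or.inl hj
      · rw [h] at hj; exact Or.inr hj
    · rintro (rfl | rfl)
      · exact ⟨hζ3, hζ1⟩
      · exact ⟨by rw [← pow_mul, mul_comm, pow_mul, hζ3, one_pow], hζ2⟩
  calc Nat.card {u : (ZMod p)ˣ // u ^ 3 = 1 ∧ u ≠ 1}
      = Set.ncard {u : (ZMod p)ˣ | u ^ 3 = 1 ∧ u ≠ 1} := Nat.card_coe_set_eq _
    _ = Set.ncard ({ζ, ζ ^ 2} : Set (ZMod p)ˣ) := by rw [hset]
    _ = 2 := Set.ncard_pair hzz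

lemma b3_prime {p : ℕ} (hp : p.Prime) (h3 : p % 3 = 1) : b₃ p = 2 := by
  haveI : NeZero p := ⟨hp.pos.ne'⟩
  rw [b3_eq_card_units (fun χ _ => isPrimitive_iff_ne_one_of_prime hp χ), count_prime hp h3]

end B3Aux

namespace B3Aux
open DirichletCharacter

set_option linter.unusedSectionVars false

section Mult

variable {m n : ℕ} [NeZero m] [NeZero n]

/-- CRT isomorphism on unit groups. -/
def Φ (hmn : m.Coprime n) : (ZMod (m * n))ˣ ≃* (ZMod m)ˣ × (ZMod n)ˣ :=
  (Units.mapEquiv (ZMod.chineseRemainder hmn).toMulEquiv).trans MulEquiv.prodUnits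

lemma Φ_fst (hmn : m.Coprime n) (x : (ZMod (m * n))ˣ) :
    ((Φ hmn x).1 : ZMod m) = ((ZMod.chineseRemainder hmn) (x : ZMod (m * n))).1 := rfl

lemma Φ_snd (hmn : m.Coprime n) (x : (ZMod (m * n))ˣ) :
    ((Φ hmn x).2 : ZMod n) = ((ZMod.chineseRemainder hmn) (x : ZMod (m * n))).2 := rfl

lemma compat (hmn : m.Coprime n) {d₁ d₂ : ℕ} (h₁ : d₁ ∣ m) (h₂ : d₂ ∣ n)
    (x : (ZMod (m * n))ˣ) :
    x ∈ (ZMod.unitsMap (mul_dvd_mul h₁ h₂)).ker ↔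
      (Φ hmn x).1 ∈ (ZMod.unitsMap h₁).ker ∧ (Φ hmn x).2 ∈ (ZMod.unitsMap h₂).ker := by
  have hcop : d₁.Coprime d₂ :=
    Nat.Coprime.coprime_dvd_right h₂ (Nat.Coprime.coprime_dvd_left h₁ hmn)
  rw [mem_ker_unitsMap, mem_ker_unitsMap, mem_ker_unitsMap, Φ_fst, Φ_snd]
  have hAB : ((ZMod.chineseRemainder hcop).toRingHom.comp
        (ZMod.castHom (mul_dvd_mul h₁ h₂) (ZMod (d₁ * d₂)))) =
      ((ZMod.castHom h₁ (ZMod d₁)).prodMap (ZMod.castHom h₂ (ZMod d₂))).comp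
        (ZMod.chineseRemainder hmn).toRingHom :=
    Subsingleton.elim _ _
  have key1 : ∀ z : ZMod (m * n),
      ((ZMod.chineseRemainder hcop) ((ZMod.castHom (mul_dvd_mul h₁ h₂) (ZMod (d₁ * d₂))) z)).1 =
        (ZMod.castHom h₁ (ZMod d₁)) (((ZMod.chineseRemainder hmn) z).1) := by
    intro z
    have := RingHom.congr_fun hAB z
    simpa [RingHom.prodMap] using congrArg Prod.fst this
  have key2 : ∀ z : ZMod (m * n),
      ((ZMod.chineseRemainder hcop) ((ZMod.castHom (mul_dvd_mul h₁ h₂) (ZMod (d₁ * d₂))) z)).2 =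
        (ZMod.castHom h₂ (ZMod d₂)) (((ZMod.chineseRemainder hmn) z).2) := by
    intro z
    have := RingHom.congr_fun hAB z
    simpa [RingHom.prodMap] using congrArg Prod.snd this
  constructor
  · intro h
    constructor
    · rw [← key1, h]; simp
    · rw [← key2, h]; simp

  · rintro ⟨ha, hb⟩
    apply (ZMod.chineseRemainder hcop).injective
    rw [map_one]
    refine Prod.ext_iff.mpr ⟨?_, ?_⟩
    · rw [key1, ha]; rfl
    · rw [key2, hb]; rfl

/-- Splitting of characters along CRT. -/
def E (hmn : m.Coprime n) :
    ((ZMod (m * n))ˣ →* ℂˣ) ≃ ((ZMod m)ˣ →* ℂˣ) × ((ZMod n)ˣ →* ℂˣ) where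
  toFun f := (f.comp ((Φ hmn).symm.toMonoidHom.comp (MonoidHom.inl _ _)),
              f.comp ((Φ hmn).symm.toMonoidHom.comp (MonoidHom.inr _ _)))
  invFun g := ((g.1.comp (MonoidHom.fst _ _)) * (g.2.comp (MonoidHom.snd _ _))).comp
      (Φ hmn).toMonoidHom
  left_inv f := by
    refine MonoidHom.ext fun x => ?_
    show f ((Φ hmn).symm ((Φ hmn x).1, 1)) * f ((Φ hmn).symm (1, (Φ hmn x).2)) = f x
    rw [← map_mul f, ← map_mul ((Φ hmn).symm)]
    simp
  right_inv g := by
    refine Prod.ext ?_ ?_ <;> refine MonoidHom.ext fun x => ?_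
    · show g.1 ((Φ hmn) ((Φ hmn).symm (x, 1))).1 * g.2 ((Φ hmn) ((Φ hmn).symm (x, 1))).2 = g.1 x
      rw [MulEquiv.apply_symm_apply]
      simp
    · show g.1 ((Φ hmn) ((Φ hmn).symm (1, x))).1 * g.2 ((Φ hmn) ((Φ hmn).symm (1, x))).2 = g.2 x
      rw [MulEquiv.apply_symm_apply]
      simp

lemma E_fst_apply (hmn : m.Coprime n) (f : (ZMod (m * n))ˣ →* ℂˣ) (a : (ZMod m)ˣ) :
    (E hmn f).1 a = f ((Φ hmn).symm (a, 1)) := rfl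

lemma E_snd_apply (hmn : m.Coprime n) (f : (ZMod (m * n))ˣ →* ℂˣ) (b : (ZMod n)ˣ) :
    (E hmn f).2 b = f ((Φ hmn).symm (1, b)) := rfl

lemma E_eval (hmn : m.Coprime n) (f : (ZMod (m * n))ˣ →* ℂˣ) (x : (ZMod (m * n))ˣ) :
    f x = (E hmn f).1 (Φ hmn x).1 * (E hmn f).2 (Φ hmn x).2 := by
  rw [E_fst_apply, E_snd_apply, ← map_mul f, ← map_mul ((Φ hmn).symm)]
  simp

lemma cube_split (hmn : m.Coprime n) (f : (ZMod (m * n))ˣ →* ℂˣ) :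
    f ^ 3 = 1 ↔ (E hmn f).1 ^ 3 = 1 ∧ (E hmn f).2 ^ 3 = 1 := by
  constructor
  · intro h
    constructor <;> ext a <;>
      rw [MonoidHom.pow_apply, MonoidHom.one_apply]
    · rw [E_fst_apply, ← MonoidHom.pow_apply, h, MonoidHom.one_apply]
    · rw [E_snd_apply, ← MonoidHom.pow_apply, h, MonoidHom.one_apply]
  · rintro ⟨h1, h2⟩
    ext x
    rw [MonoidHom.pow_apply, MonoidHom.one_apply, E_eval hmn f x, mul_pow,
      ← MonoidHom.pow_apply, ← MonoidHom.pow_apply, h1, h2, MonoidHom.one_apply,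
      MonoidHom.one_apply, mul_one]

lemma ker_split (hmn : m.Coprime n) (f : (ZMod (m * n))ˣ →* ℂˣ) {d₁ d₂ : ℕ}
    (h₁ : d₁ ∣ m) (h₂ : d₂ ∣ n) :
    (ZMod.unitsMap (mul_dvd_mul h₁ h₂)).ker ≤ f.ker ↔
      ((ZMod.unitsMap h₁).ker ≤ (E hmn f).1.ker ∧ (ZMod.unitsMap h₂).ker ≤ (E hmn f).2.ker) := by
  constructor
  · intro H
    constructor
    · intro a ha
      have hx : (Φ hmn).symm (a, 1) ∈ (ZMod.unitsMap (mul_dvd_mul h₁ h₂)).ker := by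
        rw [compat hmn h₁ h₂, MulEquiv.apply_symm_apply]
        exact ⟨ha, one_mem _⟩
      have := H hx
      rw [MonoidHom.mem_ker] at this ⊢
      rw [E_fst_apply]
      exact this
    · intro b hb
      have hx : (Φ hmn).symm (1, b) ∈ (ZMod.unitsMap (mul_dvd_mul h₁ h₂)).ker := by
        rw [compat hmn h₁ h₂, MulEquiv.apply_symm_apply]
        exact ⟨one_mem _, hb⟩
      have := H hx
      rw [MonoidHom.mem_ker] at this ⊢
      rw [E_snd_apply]
      exact this
  · rintro ⟨H1, H2⟩ x hx
    obtain ⟨ha, hb⟩ := (compat hmn h₁ h₂ x).mp hx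
    have e1 := H1 ha
    have e2 := H2 hb
    rw [MonoidHom.mem_ker] at e1 e2 ⊢
    rw [E_eval hmn f x, e1, e2, mul_one]

lemma prim_split (hmn : m.Coprime n) (f : (ZMod (m * n))ˣ →* ℂˣ) :
    Prim (m * n) f ↔ Prim m (E hmn f).1 ∧ Prim n (E hmn f).2 := by
  constructor
  · intro P
    constructor
    · intro e he hne hker
      refine P (e * n) (mul_dvd_mul he dvd_rfl)
        (fun h => hne (Nat.eq_of_mul_eq_mul_right (Nat.pos_of_ne_zero (NeZero.ne n)) h)) ?_
      refine (ker_split hmn f he dvd_rfl).mpr ⟨hker, ?_⟩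
      intro x hx
      rw [ZMod.unitsMap_self] at hx
      have hx1 : x = 1 := by simpa [MonoidHom.mem_ker] using hx
      rw [hx1]
      exact one_mem _
    · intro e he hne hker
      refine P (m * e) (mul_dvd_mul dvd_rfl he)
        (fun h => hne (Nat.eq_of_mul_eq_mul_left (Nat.pos_of_ne_zero (NeZero.ne m)) h)) ?_
      refine (ker_split hmn f dvd_rfl he).mpr ⟨?_, hker⟩
      intro x hx
      rw [ZMod.unitsMap_self] at hx
      have hx1 : x = 1 := by simpa [MonoidHom.mem_ker] using hx
      rw [hx1]
      exact one_mem _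
  · rintro ⟨P1, P2⟩ d hd hne hker
    obtain ⟨d₁, d₂, h₁, h₂, rfl⟩ : ∃ d₁ d₂, d₁ ∣ m ∧ d₂ ∣ n ∧ d₁ * d₂ = d := by
      refine ⟨Nat.gcd d m, Nat.gcd d n, Nat.gcd_dvd_right d m, Nat.gcd_dvd_right d n, ?_⟩
      exact (Nat.gcd_mul_gcd_eq_iff_dvd_mul_of_coprime hmn).mpr hd
    obtain ⟨hk1, hk2⟩ := (ker_split hmn f h₁ h₂).mp hker
    by_cases h : d₁ = m
    · exact P2 d₂ h₂ (fun h2 => hne (by rw [h, h2])) hk2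
    · exact P1 d₁ h₁ h hk1

lemma b3_mul (hmn : m.Coprime n) : b₃ (m * n) = b₃ m * b₃ n := by
  haveI : NeZero (m * n) := ⟨mul_ne_zero (NeZero.ne m) (NeZero.ne n)⟩
  rw [b₃_eq (m * n), b₃_eq m, b₃_eq n, ← Nat.card_prod]
  refine Nat.card_congr ?_
  refine (Equiv.subtypeEquiv (E hmn) fun f => ?_).trans Equiv.subtypeProdEquivProd
  rw [cube_split hmn f, prim_split hmn f]
  tauto

end Mult

end B3Aux

theorem b₃_multiplicative_and_values :
    b₃ 1 = 1 ∧
    (∀ m n : ℕ, Nat.Coprime m n → b₃ (m * n) = b₃ m * b₃ n) ∧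
    (∀ r : ℕ, 1 ≤ r → b₃ (2 ^ r) = 0) ∧
    b₃ 3 = 0 ∧
    b₃ 9 = 2 ∧
    (∀ r : ℕ, 3 ≤ r → b₃ (3 ^ r) = 0) ∧
    (∀ p : ℕ, p.Prime → 5 ≤ p →
      (p % 3 = 1 → b₃ p = 2) ∧
      (p % 3 ≠ 1 → b₃ p = 0) ∧
      (∀ r : ℕ, 2 ≤ r → b₃ (p ^ r) = 0)) := by
  refine ⟨B3Aux.b3_one, ?_, ?_, ?_, B3Aux.b3_nine,
    fun r hr => B3Aux.b3_three_pow_eq_zero hr, ?_⟩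
  · intro m n h
    rcases eq_or_ne m 0 with rfl | hm
    · have hn : n = 1 := (Nat.coprime_zero_left n).mp h
      subst hn
      simp [B3Aux.b3_one]
    rcases eq_or_ne n 0 with rfl | hn
    · have hm1 : m = 1 := (Nat.coprime_zero_right m).mp h
      subst hm1
      simp [B3Aux.b3_one]
    haveI : NeZero m := ⟨hm⟩
    haveI : NeZero n := ⟨hn⟩
    exact B3Aux.b3_mul h
  · intro r hr
    haveI : NeZero (2 ^ r) := ⟨pow_ne_zero r two_ne_zero⟩
    refine B3Aux.b3_eq_zero_of_not_dvd (Nat.one_lt_two_pow (by omega)).ne ?_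
    rw [B3Aux.card_units_zmod, Nat.totient_prime_pow Nat.prime_two (by omega)]
    intro hdvd
    have h1 : (3:ℕ) ∣ 2 ^ (r - 1) := by simpa using hdvd
    have := Nat.prime_three.dvd_of_dvd_pow h1
    norm_num at this
  · refine B3Aux.b3_eq_zero_of_not_dvd (by norm_num) ?_
    rw [B3Aux.card_units_zmod]
    decide
  · intro p hp hp5
    haveI : NeZero p := ⟨hp.pos.ne'⟩
    refine ⟨fun h1 => B3Aux.b3_prime hp h1, fun h1 => ?_,
      fun r hr => B3Aux.b3_prime_pow_eq_zero hp (by omega) hr⟩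
    refine B3Aux.b3_eq_zero_of_not_dvd hp.one_lt.ne ?_
    rw [B3Aux.card_units_zmod, Nat.totient_prime hp]
    intro hd
    omega
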